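/- The TSSP scheme conserves the discrete L² norm: if U^{n+1} is obtained from U^n by (i) a discrete sine-transform step multiplying each sine coefficient by exp(−iΔt μ_k²/4), (ii) pointwise multiplication by a unimodular complex factor exp(−iΔt Θ_j) with Θ_j real, and (iii) another step as in (i), then h_r Σ_{j=1}^{J−1} |U_j^{n+1}|² = h_r Σ_{j=1}^{J−1} |U_j^n|². -/

import Mathlib

open Finset Complex
namespace TSSPaux

open Finset Complex


noncomputable def E (J : ℕ) (m : ℤ) : ℂ := Complex.exp (m * Real.pi * Complex.I / J)

lemma E_ne_zero (J : ℕ) (m : ℤ) : E J m ≠ 0 := Complex.exp_ne_zero _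

lemma E_add (J : ℕ) (m n : ℤ) : E J (m + n) = E J m * E J n := by
  rw [E, E, E, ← Complex.exp_add]; congr 1; push_cast; ring

lemma E_neg (J : ℕ) (m : ℤ) : E J (-m) = (E J m)⁻¹ := by
  rw [E, E, ← Complex.exp_neg]; congr 1; push_cast; ring

lemma E_zero (J : ℕ) : E J 0 = 1 := by simp [E]

lemma E_pow_J (J : ℕ) (hJ : 0 < J) (m : ℤ) : E J m ^ J = (-1 : ℂ) ^ m := by
  rw [E, ← Complex.exp_nat_mul]
  have hJc : (J : ℂ) ≠ 0 := Nat.cast_ne_zero.2 hJ.ne'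
  have : (J : ℂ) * ((m : ℂ) * Real.pi * Complex.I / J) = m * (Real.pi * Complex.I) := by
    field_simp
  rw [this, Complex.exp_int_mul, Complex.exp_pi_mul_I]

lemma E_ne_one (J : ℕ) (hJ : 0 < J) (m : ℤ) (hm0 : m ≠ 0) (hm : |m| < 2 * J) :
    E J m ≠ 1 := by
  intro h
  rw [E, Complex.exp_eq_one_iff] at h
  obtain ⟨n, hn⟩ := h
  have hπ : (Real.pi : ℂ) ≠ 0 := by exact_mod_cast Real.pi_ne_zero
  have hJc : (J : ℂ) ≠ 0 := Nat.cast_ne_zero.2 hJ.ne'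
  have hI : Complex.I ≠ 0 := Complex.I_ne_zero
  have hmc : (m : ℂ) = 2 * n * J := by
    field_simp at hn
    have h2 := mul_right_cancel₀ hI (by linear_combination (Real.pi * Complex.I) * hn :
      (m : ℂ) * Real.pi * Complex.I = 2 * n * (J : ℂ) * Real.pi * Complex.I)
    exact mul_right_cancel₀ hπ h2
  have hmz : m = 2 * n * J := by exact_mod_cast hmc
  rcases eq_or_ne n 0 with h | h
  · exact hm0 (by simp [hmz, h])
  · have : (2 : ℤ) * J ≤ |m| := by
      rw [hmz]
      calc (2:ℤ) * J = 1 * (2 * J) := by ring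
      _ ≤ |n| * (2 * J) := by
        have : 1 ≤ |n| := Int.one_le_abs (by exact_mod_cast h)
        exact mul_le_mul_of_nonneg_right this (by positivity)
      _ = |2 * n * J| := by
        rw [abs_mul, abs_mul]
        simp [abs_of_nonneg, mul_comm, mul_assoc, mul_left_comm]
    omega

lemma neg_one_zpow_eq (m : ℤ) : ((-1 : ℂ)) ^ (-m) = (-1 : ℂ) ^ m := by
  have hx : ((-1 : ℂ) ^ m) * ((-1 : ℂ) ^ m) = 1 := by
    rw [← zpow_add₀ (by norm_num : (-1 : ℂ) ≠ 0)]
    have : m + m = 2 * m := by ring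
    rw [this, zpow_mul]
    norm_num
  rw [zpow_neg, inv_eq_of_mul_eq_one_right hx]

lemma G_eq (J : ℕ) (hJ : 0 < J) (m : ℤ) (hm0 : m ≠ 0) (hm : |m| < 2 * J) :
    ∑ j ∈ range J, (E J m) ^ j = ((-1 : ℂ) ^ m - 1) / (E J m - 1) := by
  rw [geom_sum_eq (E_ne_one J hJ m hm0 hm), E_pow_J J hJ]

lemma G_even (J : ℕ) (hJ : 0 < J) (m : ℤ) (hm0 : m ≠ 0) (hm : |m| < 2 * J)
    (hme : Even m) : ∑ j ∈ range J, (E J m) ^ j = 0 := by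
  rw [G_eq J hJ m hm0 hm, hme.neg_one_zpow]
  simp

lemma pair_inv (w : ℂ) (h0 : w ≠ 0) (h1 : w ≠ 1) :
    1 / (w - 1) + 1 / (w⁻¹ - 1) = -1 := by
  have h2 : w - 1 ≠ 0 := sub_ne_zero.2 h1
  have h3 : w⁻¹ - 1 ≠ 0 := sub_ne_zero.2 (by
    rw [Ne, inv_eq_one]; exact h1)
  have h4 : 1 - w ≠ 0 := fun h => h1 (by linear_combination -h)
  field_simp
  ring

lemma G_pair (J : ℕ) (hJ : 0 < J) (m : ℤ) (hm0 : m ≠ 0) (hm : |m| < 2 * J) :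
    (∑ j ∈ range J, (E J m) ^ j) + (∑ j ∈ range J, (E J (-m)) ^ j)
      = 1 - (-1 : ℂ) ^ m := by
  have hm0' : -m ≠ 0 := neg_ne_zero.2 hm0
  have hm' : |(-m)| < 2 * J := by rwa [abs_neg]
  rw [G_eq J hJ m hm0 hm, G_eq J hJ (-m) hm0' hm', neg_one_zpow_eq, E_neg]
  have := pair_inv (E J m) (E_ne_zero J m) (E_ne_one J hJ m hm0 hm)
  have h2 : E J m - 1 ≠ 0 := sub_ne_zero.2 (E_ne_one J hJ m hm0 hm)
  have h3 : (E J m)⁻¹ - 1 ≠ 0 := sub_ne_zero.2 (by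
    rw [Ne, inv_eq_one]; exact E_ne_one J hJ m hm0 hm)
  field_simp at this ⊢
  linear_combination ((-1:ℂ)^m - 1) * this


noncomputable def s (J j k : ℕ) : ℂ := ((Real.sin (j * k * Real.pi / J) : ℝ) : ℂ)

lemma s_eq (J j k : ℕ) :
    s J j k = ((E J k) ^ j - (E J (-(k : ℤ))) ^ j) / (2 * Complex.I) := by
  have h1 : (E J (k : ℤ)) ^ j
      = Complex.exp (((j * k * Real.pi / J : ℝ) : ℂ) * Complex.I) := by
    rw [E, ← Complex.exp_nat_mul]; congr 1; push_cast; ring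
  have h2 : (E J (-(k : ℤ))) ^ j
      = Complex.exp (-(((j * k * Real.pi / J : ℝ) : ℂ)) * Complex.I) := by
    rw [E, ← Complex.exp_nat_mul]; congr 1; push_cast; ring
  rw [s, Complex.ofReal_sin, Complex.sin, h1, h2]
  have hI : Complex.I ≠ 0 := Complex.I_ne_zero
  set A := Complex.exp ((((j * k * Real.pi / J : ℝ) : ℂ)) * Complex.I) with hA
  set B := Complex.exp (-(((j * k * Real.pi / J : ℝ) : ℂ)) * Complex.I) with hB
  field_simp
  linear_combination (B - A) * Complex.I_mul_I

lemma s_zero (J k : ℕ) : s J 0 k = 0 := by simp [s]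

lemma s_comm (J j k : ℕ) : s J j k = s J k j := by
  rw [s, s, mul_comm (j : ℝ) (k : ℝ)]

lemma s_conj (J j k : ℕ) : (starRingEnd ℂ) (s J j k) = s J j k := Complex.conj_ofReal _

lemma orth (J : ℕ) (hJ : 2 ≤ J) {k l : ℕ}
    (hk : k ∈ Finset.Icc 1 (J - 1)) (hl : l ∈ Finset.Icc 1 (J - 1)) :
    ∑ j ∈ Finset.Icc 1 (J - 1), s J j k * s J j l
      = if k = l then (J : ℂ) / 2 else 0 := by
  have hJ0 : 0 < J := by omega
  rw [Finset.mem_Icc] at hk hl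
  have hk1 : 1 ≤ k := hk.1
  have hkJ : k < J := by omega
  have hl1 : 1 ≤ l := hl.1
  have hlJ : l < J := by omega
  -- extend the sum to range J
  have hext : ∑ j ∈ Finset.Icc 1 (J - 1), s J j k * s J j l
      = ∑ j ∈ Finset.range J, s J j k * s J j l := by
    have hIco : Finset.Icc 1 (J - 1) = Finset.Ico 1 J := by
      ext x; simp only [Finset.mem_Icc, Finset.mem_Ico]; omega
    rw [hIco, Finset.range_eq_Ico, Finset.sum_eq_sum_Ico_succ_bot hJ0, s_zero, zero_mul,
      zero_add]
  rw [hext]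
  -- expand each term into four geometric terms
  have hterm : ∀ j ∈ Finset.range J, s J j k * s J j l
      = -(1/4 : ℂ) * ((E J ((k : ℤ) + l)) ^ j - (E J ((k : ℤ) - l)) ^ j
          - (E J ((l : ℤ) - k)) ^ j + (E J (-((k : ℤ) + l))) ^ j) := by
    intro j _
    rw [s_eq, s_eq]
    have e1 : (E J ((k : ℤ) + l)) ^ j = (E J k) ^ j * (E J l) ^ j := by
      rw [E_add, mul_pow]
    have e2 : (E J ((k : ℤ) - l)) ^ j = (E J k) ^ j * (E J (-(l:ℤ))) ^ j := by
      rw [show (k : ℤ) - l = (k : ℤ) + (-(l:ℤ)) by ring, E_add, mul_pow]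
    have e3 : (E J ((l : ℤ) - k)) ^ j = (E J (-(k:ℤ))) ^ j * (E J l) ^ j := by
      rw [show (l : ℤ) - k = (-(k : ℤ)) + (l:ℤ) by ring, E_add, mul_pow]
    have e4 : (E J (-((k : ℤ) + l))) ^ j = (E J (-(k:ℤ))) ^ j * (E J (-(l:ℤ))) ^ j := by
      rw [show -((k : ℤ) + l) = (-(k : ℤ)) + (-(l:ℤ)) by ring, E_add, mul_pow]
    rw [e1, e2, e3, e4]
    have hI : Complex.I ≠ 0 := Complex.I_ne_zero
    field_simp
    linear_combination (4 : ℂ) * ((E J k) ^ j - (E J (-(k:ℤ))) ^ j)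
      * ((E J l) ^ j - (E J (-(l:ℤ))) ^ j) * Complex.I_sq
  rw [Finset.sum_congr rfl hterm]
  rw [← Finset.mul_sum]
  simp only [Finset.sum_add_distrib, Finset.sum_sub_distrib]
  by_cases hkl : k = l
  · subst hkl
    simp only [if_pos rfl]
    have h0 : (k : ℤ) - k = 0 := by ring
    have hG2 : ∑ j ∈ Finset.range J, (E J ((k : ℤ) + k)) ^ j = 0 := by
      refine G_even J hJ0 _ (by omega) (by rw [abs_lt]; omega) ⟨k, rfl⟩
    have hG2' : ∑ j ∈ Finset.range J, (E J (-((k : ℤ) + k))) ^ j = 0 := by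
      refine G_even J hJ0 _ (by omega) (by rw [abs_lt]; omega) ⟨-k, by ring⟩
    rw [h0, hG2, hG2']
    simp [E_zero]
    ring
  · simp only [if_neg hkl]
    have hkl' : (k : ℤ) ≠ l := by exact_mod_cast hkl
    have hP1 : (∑ j ∈ Finset.range J, (E J ((k:ℤ)+l)) ^ j)
        + (∑ j ∈ Finset.range J, (E J (-((k:ℤ)+l))) ^ j) = 1 - (-1:ℂ) ^ ((k:ℤ)+l) :=
      G_pair J hJ0 _ (by omega) (by rw [abs_lt]; omega)
    have hP2 : (∑ j ∈ Finset.range J, (E J ((k:ℤ)-l)) ^ j)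
        + (∑ j ∈ Finset.range J, (E J (-((k:ℤ)-l))) ^ j) = 1 - (-1:ℂ) ^ ((k:ℤ)-l) :=
      G_pair J hJ0 _ (by omega) (by rw [abs_lt]; omega)
    have hneg : -((k:ℤ) - l) = (l:ℤ) - k := by ring
    rw [hneg] at hP2
    have hpar : (-1:ℂ) ^ ((k:ℤ)+l) = (-1:ℂ) ^ ((k:ℤ)-l) := by
      have : (k:ℤ) + l = ((k:ℤ) - l) + 2 * l := by ring
      rw [this, zpow_add₀ (by norm_num : (-1:ℂ) ≠ 0), zpow_mul]
      norm_num
    linear_combination (-(1/4):ℂ) * (hP1 - hP2) + (1/4 : ℂ) * hpar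

lemma parseval (J : ℕ) (hJ : 2 ≤ J) (a : ℕ → ℂ) :
    ∑ j ∈ Finset.Icc 1 (J - 1), ‖∑ k ∈ Finset.Icc 1 (J - 1), a k * s J j k‖ ^ 2
      = (J : ℝ) / 2 * ∑ k ∈ Finset.Icc 1 (J - 1), ‖a k‖ ^ 2 := by
  have key : (((∑ j ∈ Finset.Icc 1 (J - 1),
        ‖∑ k ∈ Finset.Icc 1 (J - 1), a k * s J j k‖ ^ 2 : ℝ)) : ℂ)
      = (((J : ℝ) / 2 * ∑ k ∈ Finset.Icc 1 (J - 1), ‖a k‖ ^ 2 : ℝ) : ℂ) := by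
    push_cast
    have h1 : ∀ j : ℕ, ((‖∑ k ∈ Finset.Icc 1 (J - 1), a k * s J j k‖ : ℝ) : ℂ) ^ 2
        = ∑ k ∈ Finset.Icc 1 (J - 1), ∑ l ∈ Finset.Icc 1 (J - 1),
            a k * (starRingEnd ℂ) (a l) * (s J j k * s J j l) := by
      intro j
      rw [← Complex.mul_conj']
      rw [map_sum, Finset.sum_mul_sum]
      refine Finset.sum_congr rfl fun k _ => Finset.sum_congr rfl fun l _ => ?_
      rw [map_mul, s_conj]
      ring
    calc ∑ j ∈ Finset.Icc 1 (J - 1),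
          ((‖∑ k ∈ Finset.Icc 1 (J - 1), a k * s J j k‖ : ℝ) : ℂ) ^ 2
        = ∑ j ∈ Finset.Icc 1 (J - 1), ∑ k ∈ Finset.Icc 1 (J - 1),
            ∑ l ∈ Finset.Icc 1 (J - 1),
            a k * (starRingEnd ℂ) (a l) * (s J j k * s J j l) := by
          exact Finset.sum_congr rfl fun j _ => h1 j
      _ = ∑ k ∈ Finset.Icc 1 (J - 1), ∑ l ∈ Finset.Icc 1 (J - 1),
            a k * (starRingEnd ℂ) (a l) *
              ∑ j ∈ Finset.Icc 1 (J - 1), s J j k * s J j l := by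
          rw [Finset.sum_comm]
          refine Finset.sum_congr rfl fun k _ => ?_
          rw [Finset.sum_comm]
          refine Finset.sum_congr rfl fun l _ => ?_
          rw [Finset.mul_sum]
      _ = ∑ k ∈ Finset.Icc 1 (J - 1), ∑ l ∈ Finset.Icc 1 (J - 1),
            a k * (starRingEnd ℂ) (a l) * (if k = l then (J : ℂ) / 2 else 0) := by
          refine Finset.sum_congr rfl fun k hk => Finset.sum_congr rfl fun l hl => ?_
          rw [orth J hJ hk hl]
      _ = ∑ k ∈ Finset.Icc 1 (J - 1), a k * (starRingEnd ℂ) (a k) * ((J : ℂ) / 2) := by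
          refine Finset.sum_congr rfl fun k hk => ?_
          rw [Finset.sum_eq_single k]
          · simp
          · intro l _ hlk
            simp [Ne.symm hlk]
          · intro h; exact absurd hk h
      _ = ((J : ℂ) / 2) * ∑ k ∈ Finset.Icc 1 (J - 1), ((‖a k‖ : ℝ) : ℂ) ^ 2 := by
          rw [Finset.mul_sum]
          refine Finset.sum_congr rfl fun k _ => ?_
          rw [Complex.mul_conj']
          ring
  exact Complex.ofReal_injective key

lemma norm_sq_smul (J : ℕ) (hJ : 2 ≤ J) (U : ℕ → ℂ) (i : ℕ) :
    ‖(2 / (J : ℂ)) * U i‖ ^ 2 = (2 / (J : ℝ)) ^ 2 * ‖U i‖ ^ 2 := by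
  rw [norm_mul, mul_pow]
  congr 2
  rw [norm_div]
  simp

lemma step (J : ℕ) (hJ : 2 ≤ J) (c : ℕ → ℂ) (hc : ∀ k, ‖c k‖ = 1)
    (U V : ℕ → ℂ)
    (hV : ∀ j, V j = ∑ k ∈ Finset.Icc 1 (J - 1),
        c k * ((2 / (J : ℂ)) * ∑ i ∈ Finset.Icc 1 (J - 1), U i * s J i k) * s J j k) :
    ∑ j ∈ Finset.Icc 1 (J - 1), ‖V j‖ ^ 2 = ∑ j ∈ Finset.Icc 1 (J - 1), ‖U j‖ ^ 2 := by
  have hJR : (0 : ℝ) < J := by positivity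
  have h1 : ∑ j ∈ Finset.Icc 1 (J - 1), ‖V j‖ ^ 2
      = (J : ℝ) / 2 * ∑ k ∈ Finset.Icc 1 (J - 1),
          ‖c k * ((2 / (J : ℂ)) * ∑ i ∈ Finset.Icc 1 (J - 1), U i * s J i k)‖ ^ 2 := by
    rw [Finset.sum_congr rfl fun j _ => by rw [hV j]]
    exact parseval J hJ _
  have h2 : ∀ k, ‖c k * ((2 / (J : ℂ)) * ∑ i ∈ Finset.Icc 1 (J - 1), U i * s J i k)‖ ^ 2
      = ‖(2 / (J : ℂ)) * ∑ i ∈ Finset.Icc 1 (J - 1), U i * s J i k‖ ^ 2 := by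
    intro k
    rw [norm_mul, hc k, one_mul]
  have h3 : ∀ k, (2 / (J : ℂ)) * ∑ i ∈ Finset.Icc 1 (J - 1), U i * s J i k
      = ∑ i ∈ Finset.Icc 1 (J - 1), ((2 / (J : ℂ)) * U i) * s J k i := by
    intro k
    rw [Finset.mul_sum]
    refine Finset.sum_congr rfl fun i _ => ?_
    rw [s_comm J i k]; ring
  have h4 : ∑ k ∈ Finset.Icc 1 (J - 1),
        ‖∑ i ∈ Finset.Icc 1 (J - 1), ((2 / (J : ℂ)) * U i) * s J k i‖ ^ 2
      = (J : ℝ) / 2 * ∑ i ∈ Finset.Icc 1 (J - 1), ‖(2 / (J : ℂ)) * U i‖ ^ 2 :=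
    parseval J hJ _
  rw [h1, Finset.sum_congr rfl fun k _ => by rw [h2 k, h3 k], h4,
    Finset.sum_congr rfl fun i _ => norm_sq_smul J hJ U i, ← Finset.mul_sum]
  field_simp

end TSSPaux

theorem tssp_norm_conservation
    (J : ℕ) (hJ : 2 ≤ J) (hJe : Even J)
    (R Δt : ℝ) (hR : 0 < R)
    (hr : ℝ) (hhr : hr = R / J)
    (μ : ℕ → ℝ) (hμ : ∀ k : ℕ, μ k = k * Real.pi / R)
    (Θ : ℕ → ℝ)
    (Un U1 U2 Un1 : ℕ → ℂ)
    (hU1 : ∀ j : ℕ, U1 j =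
      ∑ k ∈ Finset.Icc 1 (J - 1),
        Complex.exp (-Complex.I * Δt * (μ k) ^ 2 / 4)
          * ((2 / (J : ℂ)) * ∑ i ∈ Finset.Icc 1 (J - 1),
              Un i * (Real.sin (i * k * Real.pi / J) : ℂ))
          * (Real.sin (j * k * Real.pi / J) : ℂ))
    (hU2 : ∀ j : ℕ, U2 j = Complex.exp (-Complex.I * Δt * Θ j) * U1 j)
    (hUn1 : ∀ j : ℕ, Un1 j =
      ∑ k ∈ Finset.Icc 1 (J - 1),
        Complex.exp (-Complex.I * Δt * (μ k) ^ 2 / 4)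
          * ((2 / (J : ℂ)) * ∑ i ∈ Finset.Icc 1 (J - 1),
              U2 i * (Real.sin (i * k * Real.pi / J) : ℂ))
          * (Real.sin (j * k * Real.pi / J) : ℂ)) :
    hr * ∑ j ∈ Finset.Icc 1 (J - 1), ‖Un1 j‖ ^ 2
      = hr * ∑ j ∈ Finset.Icc 1 (J - 1), ‖Un j‖ ^ 2 := by
  have hc : ∀ k : ℕ, ‖Complex.exp (-Complex.I * Δt * (μ k) ^ 2 / 4)‖ = 1 := by
    intro k
    have : -Complex.I * (Δt : ℂ) * ((μ k : ℝ) : ℂ) ^ 2 / 4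
        = ((-(Δt * (μ k) ^ 2 / 4) : ℝ) : ℂ) * Complex.I := by push_cast; ring
    rw [this]
    exact Complex.norm_exp_ofReal_mul_I _
  have e1 : ∑ j ∈ Finset.Icc 1 (J - 1), ‖U1 j‖ ^ 2
      = ∑ j ∈ Finset.Icc 1 (J - 1), ‖Un j‖ ^ 2 := by
    refine TSSPaux.step J hJ _ hc Un U1 ?_
    intro j
    simp only [TSSPaux.s]
    exact hU1 j
  have e2 : ∑ j ∈ Finset.Icc 1 (J - 1), ‖U2 j‖ ^ 2
      = ∑ j ∈ Finset.Icc 1 (J - 1), ‖U1 j‖ ^ 2 := by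
    refine Finset.sum_congr rfl fun j _ => ?_
    have h : -Complex.I * (Δt : ℂ) * ((Θ j : ℝ) : ℂ)
        = ((-(Δt * Θ j) : ℝ) : ℂ) * Complex.I := by push_cast; ring
    rw [hU2 j, norm_mul, h, Complex.norm_exp_ofReal_mul_I, one_mul]
  have e3 : ∑ j ∈ Finset.Icc 1 (J - 1), ‖Un1 j‖ ^ 2
      = ∑ j ∈ Finset.Icc 1 (J - 1), ‖U2 j‖ ^ 2 := by
    refine TSSPaux.step J hJ _ hc U2 Un1 ?_
    intro j
    simp only [TSSPaux.s]
    exact hUn1 j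
  rw [e3, e2, e1]
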